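/- Let (F_t^B) be a filtration, and suppose at each round t: π_t ∈ [π_min, 1] is F_{t-1}^B-measurable with π_min > 0; B_t is a Bernoulli(π_t) random variable conditionally independent (given F_{t-1}^B) of a bounded random variable X_t with |X_t| ≤ 1-α; and E[X_t | F_{t-1}^B] ≥ 0. Define X̃_t := (B_t/π_t)·X_t and let λ_t be F_{t-1}^B-measurable with λ_t ∈ [0, π_min/(1-α)]. Then Ẽ_t := ∏_{s=1}^t (1 - λ_s X̃_s) is a nonnegative supermartingale with Ẽ_0 = 1, and moreover E[X̃_t | F_{t-1}^B] = E[X_t | F_{t-1}^B]. -/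

import Mathlib

open MeasureTheory Finset

private lemma int_of_bdd' {Ω : Type*} {m m0 : MeasurableSpace Ω} {μ : Measure Ω}
    [IsFiniteMeasure μ] (hm : m ≤ m0) {f : Ω → ℝ} (hf : StronglyMeasurable[m] f)
    {C : ℝ} (hC : ∀ ω, |f ω| ≤ C) : Integrable f μ :=
  memLp_one_iff_integrable.mp <|
    MemLp.of_bound ((hf.mono hm).aestronglyMeasurable) C
      (Filter.Eventually.of_forall fun ω => by simpa [Real.norm_eq_abs] using hC ω)

/-- Sparse-verifier (importance-weighted) e-process validity: with predictable sampling
rates `π t ∈ [π_min, 1]`, Bernoulli coins `B t ∈ {0,1}` with conditional mean `π t`,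
conditionally independent of the bounded increment `X t` (`|X t| ≤ 1-α`,
`E[X t | F (t-1)] ≥ 0`) — expressed by the product rule
`E[B t · X t | F (t-1)] = π t · E[X t | F (t-1)]` — the importance-weighted increment
`X̃ t = (B t / π t) · X t` satisfies `E[X̃ t | F (t-1)] = E[X t | F (t-1)]`, and with
predictable bets `lam t ∈ [0, π_min/(1-α)]` the process
`Ẽ t = ∏_{s=1}^t (1 - lam s · X̃ s)` is a nonnegative supermartingale with `Ẽ 0 = 1`. -/
theorem sparse_verifier_eprocess
    {Ω : Type*} {m0 : MeasurableSpace Ω} {μ : Measure Ω} [IsProbabilityMeasure μ]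
    (ℱ : Filtration ℕ m0) (α πmin : ℝ)
    (hα : α ∈ Set.Ioo (0 : ℝ) 1) (hπmin : 0 < πmin)
    (pr B X lam : ℕ → Ω → ℝ)
    (hprmeas : ∀ t, 1 ≤ t → StronglyMeasurable[ℱ (t - 1)] (pr t))
    (hprval : ∀ t ω, pr t ω ∈ Set.Icc πmin 1)
    (hBmeas : ∀ t, StronglyMeasurable[ℱ t] (B t))
    (hBval : ∀ t ω, B t ω = 0 ∨ B t ω = 1)
    (hBmean : ∀ t, 1 ≤ t → μ[B t | ℱ (t - 1)] =ᵐ[μ] pr t)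
    (hXmeas : ∀ t, StronglyMeasurable[ℱ t] (X t))
    (hXbdd : ∀ t ω, |X t ω| ≤ 1 - α)
    (hXnull : ∀ t, 1 ≤ t → ∀ᵐ ω ∂μ, 0 ≤ (μ[X t | ℱ (t - 1)]) ω)
    (hcondind : ∀ t, 1 ≤ t →
      μ[fun ω => B t ω * X t ω | ℱ (t - 1)]
        =ᵐ[μ] fun ω => pr t ω * (μ[X t | ℱ (t - 1)]) ω)
    (hlammeas : ∀ t, 1 ≤ t → StronglyMeasurable[ℱ (t - 1)] (lam t))
    (hlamval : ∀ t ω, lam t ω ∈ Set.Icc (0 : ℝ) (πmin / (1 - α)))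
    (Xt Et : ℕ → Ω → ℝ)
    (hXt : ∀ t ω, Xt t ω = B t ω / pr t ω * X t ω)
    (hEt : ∀ t ω, Et t ω = ∏ s ∈ Finset.Icc 1 t, (1 - lam s ω * Xt s ω)) :
    (Supermartingale Et ℱ μ ∧ (∀ ω, Et 0 ω = 1) ∧ ∀ t ω, 0 ≤ Et t ω) ∧
      ∀ t, 1 ≤ t → μ[Xt t | ℱ (t - 1)] =ᵐ[μ] μ[X t | ℱ (t - 1)] := by
  obtain ⟨hα0, hα1⟩ := hα
  have hβ : (0:ℝ) < 1 - α := by linarith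
  -- pointwise bounds
  have hprpos : ∀ t ω, 0 < pr t ω := fun t ω => lt_of_lt_of_le hπmin (hprval t ω).1
  have hXtbdd : ∀ t ω, |Xt t ω| ≤ (1 - α) / πmin := by
    intro t ω
    rw [hXt]
    rcases hBval t ω with h0 | h1
    · rw [h0]; simp; positivity
    · have hpr := (hprval t ω).1
      rw [h1, abs_mul, abs_div, abs_one, abs_of_pos (hprpos t ω)]
      calc 1 / pr t ω * |X t ω| ≤ 1 / πmin * (1 - α) := by
            apply mul_le_mul (by apply one_div_le_one_div_of_le hπmin hpr)
              (hXbdd t ω) (abs_nonneg _) (by positivity)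
        _ = (1 - α) / πmin := one_div_mul_eq_div _ _
  have hfac01 : ∀ t ω, |lam t ω * Xt t ω| ≤ 1 := by
    intro t ω
    obtain ⟨hl0, hl1⟩ := hlamval t ω
    rw [abs_mul, abs_of_nonneg hl0]
    calc lam t ω * |Xt t ω| ≤ (πmin / (1 - α)) * ((1 - α) / πmin) :=
          mul_le_mul hl1 (hXtbdd t ω) (abs_nonneg _) (by positivity)
      _ = 1 := by field_simp
  have hfacnn : ∀ t ω, 0 ≤ 1 - lam t ω * Xt t ω := by
    intro t ω; have := (abs_le.mp (hfac01 t ω)).2; linarith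
  have hfacle2 : ∀ t ω, 1 - lam t ω * Xt t ω ≤ 2 := by
    intro t ω; have := (abs_le.mp (hfac01 t ω)).1; linarith
  have hEtnn : ∀ t ω, 0 ≤ Et t ω := by
    intro t ω; rw [hEt]; exact Finset.prod_nonneg fun s _ => hfacnn s ω
  have hEtbdd : ∀ t ω, |Et t ω| ≤ 2 ^ t := by
    intro t ω
    rw [abs_of_nonneg (hEtnn t ω), hEt]
    calc ∏ s ∈ Finset.Icc 1 t, (1 - lam s ω * Xt s ω)
        ≤ ∏ _s ∈ Finset.Icc 1 t, (2:ℝ) :=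
          Finset.prod_le_prod (fun s _ => hfacnn s ω) (fun s _ => hfacle2 s ω)
      _ = 2 ^ t := by rw [Finset.prod_const, Nat.card_Icc]; norm_num
  -- measurability
  have hXtmeas : ∀ t, 1 ≤ t → StronglyMeasurable[ℱ t] (Xt t) := by
    intro t ht
    have h : Xt t = fun ω => B t ω / pr t ω * X t ω := funext (hXt t)
    rw [h]
    exact (((hBmeas t).measurable.div ((hprmeas t ht).mono (ℱ.mono (Nat.sub_le t 1))).measurable).mul (hXmeas t).measurable).stronglyMeasurable
  have hEtmeas : ∀ t, StronglyMeasurable[ℱ t] (Et t) := by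
    intro t
    have h : Et t = fun ω => ∏ s ∈ Finset.Icc 1 t, (1 - lam s ω * Xt s ω) := funext (hEt t)
    rw [h]
    apply Finset.stronglyMeasurable_fun_prod
    intro s hs
    obtain ⟨hs1, hst⟩ := Finset.mem_Icc.mp hs
    exact stronglyMeasurable_const.sub
      (((hlammeas s hs1).mono (ℱ.mono ((Nat.sub_le s 1).trans hst))).mul
        ((hXtmeas s hs1).mono (ℱ.mono hst)))
  have hEtint : ∀ t, Integrable (Et t) μ :=
    fun t => int_of_bdd' (ℱ.le t) (hEtmeas t) (hEtbdd t)
  have hXtint : ∀ t, 1 ≤ t → Integrable (Xt t) μ :=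
    fun t ht => int_of_bdd' (ℱ.le t) (hXtmeas t ht) (hXtbdd t)
  -- conditional expectation of the reweighted increment
  have hXcond : ∀ t, 1 ≤ t → μ[Xt t | ℱ (t-1)] =ᵐ[μ] μ[X t | ℱ (t-1)] := by
    intro t ht
    have hinv : StronglyMeasurable[ℱ (t-1)] (fun ω => (pr t ω)⁻¹) := (hprmeas t ht).measurable.inv.stronglyMeasurable
    have hBXmeas : StronglyMeasurable[ℱ t] (fun ω => B t ω * X t ω) :=
      (hBmeas t).mul (hXmeas t)
    have hBXbdd : ∀ ω, |B t ω * X t ω| ≤ 1 - α := by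
      intro ω
      rcases hBval t ω with h | h
      · rw [h]; simpa using hβ.le
      · rw [h, one_mul]; exact hXbdd t ω
    have hBXint : Integrable (fun ω => B t ω * X t ω) μ :=
      int_of_bdd' (ℱ.le t) hBXmeas hBXbdd
    have heq : Xt t = (fun ω => (pr t ω)⁻¹) * (fun ω => B t ω * X t ω) := by
      funext ω
      simp only [Pi.mul_apply, hXt t ω, div_eq_mul_inv]
      ring
    have hXtint' : Integrable ((fun ω => (pr t ω)⁻¹) * fun ω => B t ω * X t ω) μ := by
      rw [← heq]; exact hXtint t ht
    have hpull := condExp_mul_of_stronglyMeasurable_left hinv hXtint' hBXint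
    rw [heq]
    refine hpull.trans ?_
    filter_upwards [hcondind t ht] with ω hω
    simp only [Pi.mul_apply, hω]
    rw [inv_mul_cancel_left₀ (ne_of_gt (hprpos t ω))]
  -- one-step supermartingale inequality
  have hstep : ∀ t, μ[Et (t+1) | ℱ t] ≤ᵐ[μ] Et t := by
    intro t
    have ht1 : 1 ≤ t + 1 := Nat.le_add_left 1 t
    have hXcond' : μ[Xt (t+1) | ℱ t] =ᵐ[μ] μ[X (t+1) | ℱ t] := hXcond (t+1) ht1
    have hlmeas : StronglyMeasurable[ℱ t] (lam (t+1)) := hlammeas (t+1) ht1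
    set G : Ω → ℝ := fun ω => lam (t+1) ω * Xt (t+1) ω with hG
    have hGint : Integrable G μ :=
      int_of_bdd' (ℱ.le (t+1))
        ((hlmeas.mono (ℱ.mono (Nat.le_succ t))).mul (hXtmeas (t+1) ht1))
        (hfac01 (t+1))
    have hfactint : Integrable (fun ω => 1 - G ω) μ := (integrable_const 1).sub hGint
    have heq : Et (t+1) = Et t * fun ω => 1 - G ω := by
      funext ω
      show Et (t+1) ω = Et t ω * (1 - G ω)
      rw [hEt, Finset.prod_Icc_succ_top ht1, hEt]
    have hEt1int : Integrable (Et t * fun ω => 1 - G ω) μ := by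
      rw [← heq]; exact hEtint (t+1)
    have hpull := condExp_mul_of_stronglyMeasurable_left (hEtmeas t) hEt1int hfactint
    have hsub : μ[(fun ω => 1 - G ω) | ℱ t] =ᵐ[μ] fun ω => 1 - (μ[G | ℱ t]) ω := by
      have h1 : (fun ω => 1 - G ω) = (fun _ => (1:ℝ)) - G := rfl
      rw [h1]
      refine (condExp_sub (integrable_const 1) hGint (ℱ t)).trans ?_
      rw [condExp_const (ℱ.le t)]
      exact Filter.Eventually.of_forall fun ω => rfl
    have hGcond : μ[G | ℱ t] =ᵐ[μ] fun ω => lam (t+1) ω * (μ[X (t+1) | ℱ t]) ω := by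
      have hG' : G = lam (t+1) * Xt (t+1) := rfl
      have hGint' : Integrable (lam (t+1) * Xt (t+1)) μ := by rw [← hG']; exact hGint
      have hpull2 := condExp_mul_of_stronglyMeasurable_left hlmeas hGint' (hXtint (t+1) ht1)
      rw [hG']
      refine hpull2.trans ?_
      filter_upwards [hXcond'] with ω hω
      simp only [Pi.mul_apply, hω]
    rw [heq]
    filter_upwards [hpull, hsub, hGcond, hXnull (t+1) ht1] with ω h1 h2 h3 h4
    rw [h1]
    simp only [Pi.mul_apply, h2, h3]
    simp only [Nat.add_sub_cancel] at h4
    have hl0 := (hlamval (t+1) ω).1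
    nlinarith [mul_nonneg (hEtnn t ω) (mul_nonneg hl0 h4), hEtnn t ω]
  refine ⟨⟨supermartingale_nat hEtmeas hEtint hstep, fun ω => by simp [hEt], hEtnn⟩, hXcond⟩
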